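/- Let R be a commutative Noetherian ring, S a finite birational extension of R, and M a finitely generated reflexive R-module. If the trace ideal tr(M) is contained in the conductor c_R(S), then the R-module structure on M extends to an S-module structure (compatible with the inclusion R ⊆ S). -/

import Mathlib

set_option synthInstance.maxHeartbeats 1000000
set_option maxHeartbeats 1000000

universe u

/-- A commutative ring is semilocal if it has only finitely many maximal ideals. -/
def IsSemilocalRing (A : Type u) [CommRing A] : Prop :=
  {m : Ideal A | m.IsMaximal}.Finite

/-- A Noetherian ring of Krull dimension one is Cohen–Macaulay iff it has no embedded
(associated) primes. -/
def IsOneDimCohenMacaulay (A : Type u) [CommRing A] : Prop :=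
  IsNoetherianRing A ∧ ringKrullDim A = 1 ∧
    ∀ p : Ideal A, IsAssociatedPrime p A → p ∈ minimalPrimes A

/-- A one-dimensional ring is equidimensional if every minimal prime has coheight one. -/
def IsEquidimOfDimOne (A : Type u) [CommRing A] : Prop :=
  ∀ p ∈ minimalPrimes A, ringKrullDim (A ⧸ p) = 1

/-- An ideal `I` is stable if `x I = I ^ 2` for some `x ∈ I`. -/
def Ideal.IsStable {A : Type u} [CommRing A] (I : Ideal A) : Prop :=
  ∃ x ∈ I, Ideal.span {x} * I = I ^ 2

/-- An ideal `I` of `A` is integrally closed (in `A`) if every element of `A` which is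
integral over `I` (i.e. satisfies an equation `r ^ n + c₁ r ^ (n-1) + ⋯ + cₙ = 0` with
`cᵢ ∈ I ^ i`) already lies in `I`. -/
def Ideal.IsIntegrallyClosedIdeal {A : Type u} [CommRing A] (I : Ideal A) : Prop :=
  ∀ (r : A) (n : ℕ), 0 < n → ∀ c : ℕ → A, (∀ i, 1 ≤ i → i ≤ n → c i ∈ I ^ i) →
    r ^ n + ∑ i ∈ Finset.range n, c (i + 1) * r ^ (n - (i + 1)) = 0 → r ∈ I

/-- An ideal of a one-dimensional equidimensional CM ring has height one iff it is proper
and contains a nonzerodivisor (i.e. is a regular proper ideal). -/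
def Ideal.IsHeightOne {A : Type u} [CommRing A] (I : Ideal A) : Prop :=
  I ≠ ⊤ ∧ ∃ x ∈ I, x ∈ nonZeroDivisors A

/-- A ring is Arf if it is semilocal, equidimensional Cohen–Macaulay of dimension one, and
every integrally closed height-one ideal is stable. -/
def IsArfRing (A : Type u) [CommRing A] : Prop :=
  IsSemilocalRing A ∧ IsOneDimCohenMacaulay A ∧ IsEquidimOfDimOne A ∧
    ∀ I : Ideal A, I.IsHeightOne → I.IsIntegrallyClosedIdeal → I.IsStable

/-- A module over a one-dimensional CM ring is maximal Cohen–Macaulay iff it is finitely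
generated, nonzero and torsion-free. -/
def IsMCMModule (A : Type u) (M : Type u) [CommRing A] [AddCommGroup M] [Module A M] : Prop :=
  Module.Finite A M ∧ Nontrivial M ∧
    ∀ a ∈ nonZeroDivisors A, ∀ m : M, a • m = 0 → m = 0

/-- A module is indecomposable iff it is nonzero and its only idempotent endomorphisms are
`0` and `1`. -/
def IsIndecomposableModule (A : Type u) (M : Type u) [Ring A] [AddCommGroup M] [Module A M] :
    Prop :=
  Nontrivial M ∧ ∀ f : Module.End A M, f * f = f → f = 0 ∨ f = 1

/-- The endomorphism ring `(J :_{Q(R)} J) = End_R(J)` of an ideal `J`, realized as the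
subalgebra of the total ring of fractions consisting of those elements multiplying `J`
into `J`. -/
def colonRing (R : Type u) [CommRing R] (J : Ideal R) : Subalgebra R (FractionRing R) where
  carrier := {q : FractionRing R |
    ∀ x ∈ J, ∃ y ∈ J, q * algebraMap R (FractionRing R) x = algebraMap R (FractionRing R) y}
  mul_mem' := by
    intro a b ha hb x hx
    obtain ⟨y, hy, hby⟩ := hb x hx
    obtain ⟨z, hz, haz⟩ := ha y hy
    exact ⟨z, hz, by rw [mul_assoc, hby, haz]⟩
  one_mem' := fun x hx => ⟨x, hx, one_mul _⟩
  add_mem' := by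
    intro a b ha hb x hx
    obtain ⟨y, hy, hay⟩ := ha x hx
    obtain ⟨z, hz, hbz⟩ := hb x hx
    exact ⟨y + z, J.add_mem hy hz, by rw [add_mul, hay, hbz, map_add]⟩
  algebraMap_mem' := fun r x hx => ⟨r * x, J.mul_mem_left r hx, (map_mul _ _ _).symm⟩

/-- The trace ideal of a module: the ideal generated by images of all linear functionals. -/
def traceIdeal (R : Type u) (M : Type u) [CommRing R] [AddCommGroup M] [Module R M] : Ideal R :=
  ⨆ f : M →ₗ[R] R, LinearMap.range f

/-- The conductor of a birational extension `S ⊆ Q(R)` of `R`: the set of elements of `R`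
multiplying `S` into (the image of) `R`. -/
def conductorIdeal (R : Type u) [CommRing R] (S : Subalgebra R (FractionRing R)) : Ideal R where
  carrier := {x : R | ∀ s ∈ S, ∃ y : R,
    algebraMap R (FractionRing R) x * s = algebraMap R (FractionRing R) y}
  zero_mem' := fun s _ => ⟨0, by simp⟩
  add_mem' := by
    intro a b ha hb s hs
    obtain ⟨y, hy⟩ := ha s hs
    obtain ⟨z, hz⟩ := hb s hs
    exact ⟨y + z, by rw [map_add, add_mul, hy, hz, map_add]⟩
  smul_mem' := by
    intro c x hx s hs
    obtain ⟨y, hy⟩ := hx s hs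
    exact ⟨c * y, by rw [smul_eq_mul, map_mul, map_mul, mul_assoc, hy]⟩

/-- The blow-up ring `B_A(J_A)` of the Jacobson radical of a birational extension
`A ⊆ Q(R)`, described as a subset of `Q(R)`:  `∪_{n>0} (J^n :_{Q(R)} J^n)`. -/
def blowUpOfJacobson (R : Type u) [CommRing R] (A : Subalgebra R (FractionRing R)) :
    Set (FractionRing R) :=
  {q : FractionRing R | ∃ n : ℕ, 0 < n ∧
    ∀ x ∈ ((⊥ : Ideal A).jacobson ^ n), ∃ y ∈ ((⊥ : Ideal A).jacobson ^ n),
      q * (x : FractionRing R) = (y : FractionRing R)}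

/-- Let `S` be a finite birational extension of a commutative Noetherian ring `R` and `M` a
finitely generated reflexive `R`-module.  If the trace ideal of `M` is contained in the
conductor of `S` into `R`, then the `R`-module structure of `M` extends to an
`S`-module structure (equivalently, there is an `R`-algebra map `S → End_R(M)`). -/
theorem module_structure_of_trace_le_conductor (R : Type u) [CommRing R] [IsNoetherianRing R]
    (S : Subalgebra R (FractionRing R)) (hfin : Module.Finite R ↥S)
    (M : Type u) [AddCommGroup M] [Module R M] [Module.Finite R M]
    (hrefl : Module.IsReflexive R M)
    (h : traceIdeal R M ≤ conductorIdeal R S) :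
    Nonempty (↥S →ₐ[R] Module.End R M) := by
  classical
  set K := FractionRing R with hK
  have hι : Function.Injective (algebraMap R K) := IsFractionRing.injective R K
  have key : ∀ (s : S) (f : M →ₗ[R] R) (m : M),
      ∃ y : R, (s : K) * algebraMap R K (f m) = algebraMap R K y := by
    intro s f m
    have hr : f m ∈ traceIdeal R M :=
      (le_iSup (fun f : M →ₗ[R] R => LinearMap.range f) f) ⟨m, rfl⟩
    obtain ⟨y, hy⟩ := h hr (s : K) s.2
    exact ⟨y, by rw [mul_comm]; exact hy⟩
  choose yf hyf using key
  have yadd : ∀ (s : S) f m m', yf s f (m + m') = yf s f m + yf s f m' := by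
    intro s f m m'
    apply hι
    rw [map_add, ← hyf, ← hyf, ← hyf, map_add, map_add, mul_add]
  have ysmul : ∀ (s : S) f (r : R) m, yf s f (r • m) = r * yf s f m := by
    intro s f r m
    apply hι
    rw [map_mul, ← hyf, ← hyf, map_smul, smul_eq_mul, map_mul]
    ring
  have yfadd : ∀ (s : S) (f f' : M →ₗ[R] R) m, yf s (f + f') m = yf s f m + yf s f' m := by
    intro s f f' m
    apply hι
    rw [map_add, ← hyf, ← hyf, ← hyf]
    simp [mul_add]
  have yfsmul : ∀ (s : S) (r : R) (f : M →ₗ[R] R) m, yf s (r • f) m = r * yf s f m := by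
    intro s r f m
    apply hι
    rw [map_mul, ← hyf, ← hyf]
    simp only [LinearMap.smul_apply, smul_eq_mul, map_mul]
    ring
  let gmap : S → M →ₗ[R] Module.Dual R (Module.Dual R M) := fun s =>
    { toFun := fun m =>
        { toFun := fun f => yf s f m
          map_add' := fun f f' => yfadd s f f' m
          map_smul' := fun r f => yfsmul s r f m }
      map_add' := fun m m' => LinearMap.ext fun f => yadd s f m m'
      map_smul' := fun r m => LinearMap.ext fun f => ysmul s f r m }
  let Φ : S → Module.End R M := fun s =>
    ((Module.evalEquiv R M).symm.toLinearMap).comp (gmap s)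
  have hΦ : ∀ (s : S) (m : M) (f : Module.Dual R M), f (Φ s m) = yf s f m := by
    intro s m f
    exact Module.apply_evalEquiv_symm_apply R M f (gmap s m)
  have Msep : ∀ x x' : M, (∀ f : Module.Dual R M, f x = f x') → x = x' := by
    intro x x' hxx'
    apply (Module.evalEquiv R M).injective
    exact LinearMap.ext hxx'
  refine ⟨{ toFun := Φ, map_one' := ?_, map_mul' := ?_, map_zero' := ?_,
            map_add' := ?_, commutes' := ?_ }⟩
  · ext m
    refine Msep _ _ fun f => ?_
    rw [hΦ]
    apply hι
    rw [← hyf]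
    simp
  · intro s t
    ext m
    refine Msep _ _ fun f => ?_
    show f (Φ (s * t) m) = f (Φ s (Φ t m))
    rw [hΦ, hΦ]
    apply hι
    rw [← hyf, ← hyf, hΦ, ← hyf]
    push_cast
    ring
  · ext m
    refine Msep _ _ fun f => ?_
    rw [hΦ]
    apply hι
    rw [← hyf]
    simp
  · intro s t
    ext m
    refine Msep _ _ fun f => ?_
    show f (Φ (s + t) m) = f (Φ s m + Φ t m)
    rw [map_add, hΦ, hΦ, hΦ]
    apply hι
    rw [map_add, ← hyf, ← hyf, ← hyf]
    push_cast
    ring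
  · intro r
    ext m
    refine Msep _ _ fun f => ?_
    show f (Φ (algebraMap R S r) m) = f (r • m)
    rw [hΦ]
    apply hι
    rw [← hyf, map_smul]
    simp [Algebra.smul_def, Subalgebra.algebraMap_eq, mul_comm]
    rfl
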